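/- Let μ be a probability mass function on a finite set X, O ⊆ X nonempty with p = ∑_{x∈O} μ(x), μ_O the conditional distribution of μ on O, ρ_O the uniform distribution on O, and ν = p·μ_O + (1−p)·ρ_O. Then for every probability mass function σ supported in O, the quadratic Bregman divergence D(a‖b) = (1/2)∑_x (a(x)−b(x))² satisfies the Pythagorean relation D(μ‖σ) = D(μ‖ν) + D(ν‖σ). -/

import Mathlib

open Finset

noncomputable def Breg {X : Type*} [Fintype X] (a b : X → ℝ) : ℝ :=
  (1/2) * ∑ x, (a x - b x)^2

theorem bregman_pythagorean {X : Type*} [Fintype X] [DecidableEq X]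
    (μ σ : X → ℝ) (O : Finset X) (hOne : O.Nonempty)
    (hμ0 : ∀ x, 0 ≤ μ x) (hμ1 : ∑ x, μ x = 1)
    (p : ℝ) (hp : p = ∑ x ∈ O, μ x) (hppos : 0 < p)
    (μO ρO ν : X → ℝ)
    (hμO : ∀ x, μO x = if x ∈ O then μ x / p else 0)
    (hρO : ∀ x, ρO x = if x ∈ O then 1 / (O.card : ℝ) else 0)
    (hν : ∀ x, ν x = p * μO x + (1 - p) * ρO x)
    (hσ0 : ∀ x, 0 ≤ σ x) (hσ1 : ∑ x, σ x = 1)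
    (hσsupp : ∀ x ∉ O, σ x = 0) :
    Breg μ σ = Breg μ ν + Breg ν σ := by
  have hcard : (0:ℝ) < (O.card : ℝ) := by
    exact_mod_cast Finset.card_pos.mpr hOne
  have hνO : ∀ x ∈ O, ν x = μ x + (1 - p) / (O.card : ℝ) := by
    intro x hx
    rw [hν, hμO, hρO, if_pos hx, if_pos hx]
    field_simp
  have hνout : ∀ x ∉ O, ν x = 0 := by
    intro x hx
    rw [hν, hμO, hρO, if_neg hx, if_neg hx]; ring
  have hνsum : ∑ x ∈ O, ν x = 1 := by
    have h1 : ∑ x ∈ O, ν x = ∑ x ∈ O, (μ x + (1 - p) / (O.card : ℝ)) :=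
      Finset.sum_congr rfl hνO
    rw [h1, Finset.sum_add_distrib, Finset.sum_const, ← hp, nsmul_eq_mul]
    field_simp
    ring
  have hσsum : ∑ x ∈ O, σ x = 1 := by
    rw [← hσ1]
    exact Finset.sum_subset (Finset.subset_univ O) (fun x _ hx => hσsupp x hx)
  have key : ∑ x, (μ x - ν x) * (ν x - σ x) = 0 := by
    have h1 : ∑ x, (μ x - ν x) * (ν x - σ x)
        = ∑ x ∈ O, (μ x - ν x) * (ν x - σ x) := by
      refine (Finset.sum_subset (Finset.subset_univ O) ?_).symm
      intro x _ hx
      rw [hνout x hx, hσsupp x hx]; ring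
    have h2 : ∑ x ∈ O, (μ x - ν x) * (ν x - σ x)
        = ∑ x ∈ O, (-(1 - p) / (O.card : ℝ)) * (ν x - σ x) := by
      refine Finset.sum_congr rfl fun x hx => ?_
      rw [hνO x hx]; ring
    rw [h1, h2, ← Finset.mul_sum, Finset.sum_sub_distrib, hνsum, hσsum]
    ring
  have expand : ∀ x : X, (μ x - σ x)^2
      = (μ x - ν x)^2 + (ν x - σ x)^2 + 2 * ((μ x - ν x) * (ν x - σ x)) := by
    intro x; ring
  simp only [Breg]
  rw [Finset.sum_congr rfl (fun x _ => expand x)]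
  rw [Finset.sum_add_distrib, Finset.sum_add_distrib, ← Finset.mul_sum, key]
  ring
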